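/- Let F be the free group of rank k ≥ 2 with free basis A, let φ ∈ Aut(F) be (s,m)-hyperbolic, and let w be a nontrivial conjugacy class (cyclic word) of minimal cyclically reduced length in its ⟨φ⟩-orbit, i.e. ||φ^i(w)|| ≥ ||w|| for all i ∈ ℤ. Then for every integer n ≥ 2, ||φ^{mn}(w)|| ≥ s^{n-1}·||w||. -/
import Mathlib


open MeasureTheory Filter Topology
open scoped ENNReal

noncomputable section

/-- The hyperbolic boundary of the free group on `α`: semi-infinite freely reduced
words over `α^{±1}` (a letter is a pair `(a, b) : α × Bool`, whose inverse is `(a, !b)`). -/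
abbrev FGBoundary (α : Type*) : Type _ :=
  { x : ℕ → α × Bool // ∀ i, x (i + 1) ≠ ((x i).1, !(x i).2) }

instance fgBoundaryMeasurableSpace (α : Type*) : MeasurableSpace (FGBoundary α) :=
  MeasurableSpace.comap (fun ω => ω.1)
    (@MeasurableSpace.pi ℕ (fun _ => α × Bool) fun _ => ⊤)

/-- The prefix of length `n` of a boundary point, as an element of the free group. -/
def bprefix {α : Type*} (ω : FGBoundary α) (n : ℕ) : FreeGroup α :=
  FreeGroup.mk (List.ofFn fun i : Fin n => ω.1 i)

/-- The freely reduced length of an element of a free group. -/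
def wlen {α : Type*} (v : FreeGroup α) : ℕ :=
  sInf { n | ∃ L : List (α × Bool), L.length = n ∧ FreeGroup.mk L = v }

/-- `m` is the uniform measure on the boundary of the free group of rank `r`:
a Borel probability measure assigning to the cylinder over each nontrivial `v` the
mass `1/(2r(2r-1)^{|v|-1})`. -/
def IsUniformBoundaryMeasure {α : Type*} (r : ℕ) (m : Measure (FGBoundary α)) : Prop :=
  IsProbabilityMeasure m ∧
    ∀ v : FreeGroup α, v ≠ 1 →
      m { ω : FGBoundary α | bprefix ω (wlen v) = v } =
        1 / ((2 * r * (2 * r - 1) ^ (wlen v - 1) : ℕ) : ℝ≥0∞)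

/-- The cyclically reduced length: the minimal length in the conjugacy class. -/
def cyclen {α : Type*} (w : FreeGroup α) : ℕ :=
  sInf (Set.range fun g : FreeGroup α => wlen (g⁻¹ * w * g))

/-- The set of cyclically reduced elements. -/
def CR (α : Type*) : Set (FreeGroup α) := { w | wlen w = cyclen w }

/-- The number of elements of `S` of length `n`. -/
def sphCount {α : Type*} (S : Set (FreeGroup α)) (n : ℕ) : ℕ :=
  Set.ncard { w ∈ S | wlen w = n }

/-- `S ⊆ W` is exponentially `W`-generic. -/
def ExpGeneric {α : Type*} (W S : Set (FreeGroup α)) : Prop :=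
  S ⊆ W ∧ ∃ D : ℝ, 0 < D ∧ ∃ σ : ℝ, 0 < σ ∧ σ < 1 ∧
    ∀ n : ℕ, 1 ≤ n → |((sphCount S n : ℝ) / (sphCount W n : ℝ)) - 1| ≤ D * σ ^ n

/-- Translation length of `φ w` on the graph `X`. -/
def translen {V : Type*} {k : ℕ} (X : SimpleGraph V)
    (φ : FreeGroup (Fin k) →* Equiv.Perm V) (w : FreeGroup (Fin k)) : ℕ :=
  sInf (Set.range fun v : V => X.dist v (φ w v))

/-- `φ` is a relabeling automorphism: induced by a permutation of `A^{±1}`. -/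
def IsRelabeling {k : ℕ} (φ : MulAut (FreeGroup (Fin k))) : Prop :=
  ∃ σ : Equiv.Perm (Fin k), ∃ b : Fin k → Bool,
    ∀ i : Fin k, φ (FreeGroup.of i) =
      if b i then (FreeGroup.of (σ i))⁻¹ else FreeGroup.of (σ i)

/-- `φ` is an inner automorphism. -/
def IsInnerAut {G : Type*} [Group G] (φ : MulAut G) : Prop :=
  ∃ g : G, ∀ x : G, φ x = g * x * g⁻¹

/-- `φ` is simple: a composition of a relabeling automorphism and an inner automorphism. -/
def IsSimpleAut {k : ℕ} (φ : MulAut (FreeGroup (Fin k))) : Prop :=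
  ∃ τ ι : MulAut (FreeGroup (Fin k)), IsRelabeling τ ∧ IsInnerAut ι ∧ φ = τ * ι

/-- Word length with respect to a generating set `S` (letters from `S ∪ S⁻¹`). -/
def wordLength {G : Type*} [Group G] (S : Set G) (g : G) : ℕ :=
  sInf { n | ∃ l : List G, l.length = n ∧ (∀ x ∈ l, x ∈ S ∨ x⁻¹ ∈ S) ∧ l.prod = g }

/-- The norm `‖φ‖_S = max_{s ∈ S} |φ(s)|_S` of an automorphism. -/
def autNorm {G : Type*} [Group G] (S : Finset G) (φ : MulAut G) : ℕ :=
  S.sup fun s => wordLength (S : Set G) (φ s)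

/-- Amenability: existence of a left-invariant finitely additive probability
measure defined on all subsets. -/
def IsAmenable (G : Type*) [Group G] : Prop :=
  ∃ μ : Set G → ℝ, (∀ A : Set G, 0 ≤ μ A) ∧ μ Set.univ = 1 ∧
    (∀ A B : Set G, Disjoint A B → μ (A ∪ B) = μ A + μ B) ∧
    ∀ (g : G) (A : Set G), μ ((g * ·) '' A) = μ A

/-- The homomorphism `Aut(G) → Aut(G_ab)` induced by abelianization. -/
def abAutHom (G : Type*) [Group G] : MulAut G →* MulAut (Abelianization G) where
  toFun e := MulEquiv.abelianizationCongr e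
  map_one' := by
    apply MulEquiv.toMonoidHom_injective
    apply Abelianization.hom_ext
    ext z
    simp [abelianizationCongr_of]
  map_mul' a b := by
    apply MulEquiv.toMonoidHom_injective
    apply Abelianization.hom_ext
    ext z
    simp [abelianizationCongr_of]


/-- growth of cyclic lengths under iteration of an `(s,m)`-hyperbolic
automorphism, for an element of minimal cyclic length in its `⟨φ⟩`-orbit. -/
theorem statement15 {k : ℕ} (hk : 2 ≤ k) (φ : MulAut (FreeGroup (Fin k)))
    (s : ℝ) (M : ℕ) (hs : 1 < s) (hM : 1 ≤ M)
    (hhyp : ∀ w : FreeGroup (Fin k),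
      s * (cyclen w : ℝ) ≤
        max ((cyclen ((φ ^ (M : ℤ)) w) : ℝ)) ((cyclen ((φ ^ (-(M : ℤ))) w) : ℝ)))
    (w : FreeGroup (Fin k))
    (hmin : ∀ i : ℤ, cyclen w ≤ cyclen ((φ ^ i) w)) :
    ∀ n : ℕ, 2 ≤ n →
      s ^ (n - 1) * (cyclen w : ℝ) ≤ (cyclen ((φ ^ (M * n)) w) : ℝ) := by
  have hs0 : (0:ℝ) < s := lt_trans one_pos hs
  -- the cyclic length along the orbit
  set c : ℤ → ℝ := fun i => (cyclen ((φ ^ (i * (M:ℤ))) w) : ℝ) with hc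
  have comp : ∀ a b : ℤ, (φ ^ a) ((φ ^ b) w) = (φ ^ (a + b)) w := by
    intro a b; rw [zpow_add]; rfl
  have hc0 : c 0 = (cyclen w : ℝ) := by simp [hc]
  have hmin' : ∀ i : ℤ, c 0 ≤ c i := by
    intro i
    rw [hc0]
    simp only [hc]
    exact_mod_cast hmin (i * (M:ℤ))
  have key : ∀ i : ℤ, s * c i ≤ max (c (i + 1)) (c (i - 1)) := by
    intro i
    have h := hhyp ((φ ^ (i * (M:ℤ))) w)
    rw [comp, comp] at h
    have e1 : (M:ℤ) + i * (M:ℤ) = (i + 1) * (M:ℤ) := by ring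
    have e2 : -(M:ℤ) + i * (M:ℤ) = (i - 1) * (M:ℤ) := by ring
    rw [e1, e2] at h
    exact h
  by_cases hw0 : cyclen w = 0
  · intro n hn
    rw [hw0]
    simp only [Nat.cast_zero, mul_zero]
    positivity
  · have hcpos : (0:ℝ) < c 0 := by
      rw [hc0]
      exact_mod_cast Nat.pos_of_ne_zero hw0
    -- monotonicity and growth
    have claim : ∀ n : ℕ, c n ≤ c (n + 1) ∧ (1 ≤ n → s * c n ≤ c (n + 1)) := by
      intro n
      induction n with
      | zero => exact ⟨hmin' 1, by omega⟩
      | succ m ih =>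
        have hcm : c 0 ≤ c (m + 1) := hmin' (m + 1)
        have hpos : (0:ℝ) < c (m + 1) := lt_of_lt_of_le hcpos hcm
        have hlt : c m < s * c (m + 1) := by
          calc c m ≤ c (m + 1) := ih.1
          _ < s * c (m + 1) := by nlinarith
        have hk := key (m + 1)
        have e3 : ((m:ℤ) + 1) - 1 = (m:ℤ) := by ring
        rw [e3] at hk
        have hmax : s * c (m + 1) ≤ c ((m:ℤ) + 1 + 1) := by
          rcases le_max_iff.mp hk with h | h
          · exact h
          · linarith
        have e4 : ((m:ℤ) + 1) + 1 = ((m + 1 : ℕ) : ℤ) + 1 := by push_cast; ring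
        rw [e4] at hmax
        refine ⟨?_, fun _ => hmax⟩
        calc c ((m + 1 : ℕ)) = c ((m:ℤ) + 1) := by push_cast; ring_nf
        _ ≤ s * c ((m:ℤ) + 1) := by nlinarith
        _ = s * c ((m + 1 : ℕ)) := by push_cast; ring_nf
        _ ≤ c (((m + 1 : ℕ) : ℤ) + 1) := hmax
    -- growth from c 0
    have grow : ∀ j : ℕ, s ^ (j + 1) * c 0 ≤ c ((j : ℤ) + 2) := by
      intro j
      induction j with
      | zero =>
        have h1 := (claim 1).2 le_rfl
        have h0 := (claim 0).1
        rw [zero_add, pow_one]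
        have e : ((0:ℕ):ℤ) + 2 = ((1:ℕ):ℤ) + 1 := by norm_num
        rw [e]
        have h0' : c 0 ≤ c 1 := by norm_num at h0; exact h0
        calc s * c 0 ≤ s * c 1 := by nlinarith [h0']
        _ = s * c ((1:ℕ):ℤ) := by norm_num
        _ ≤ c (((1:ℕ):ℤ) + 1) := h1
      | succ m ih =>
        have h := (claim (m + 2)).2 (by omega)
        have e : ((m:ℤ) + 2) = ((m + 2 : ℕ) : ℤ) := by push_cast; ring
        have e2 : ((m + 1 : ℕ) : ℤ) + 2 = ((m + 2 : ℕ) : ℤ) + 1 := by push_cast; ring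
        rw [e2]
        calc s ^ (m + 1 + 1) * c 0 = s * (s ^ (m + 1) * c 0) := by ring
        _ ≤ s * c ((m:ℤ) + 2) := by nlinarith
        _ = s * c ((m + 2 : ℕ)) := by rw [e]
        _ ≤ c (((m + 2 : ℕ) : ℤ) + 1) := h
    intro n hn
    obtain ⟨j, rfl⟩ : ∃ j, n = j + 2 := ⟨n - 2, by omega⟩
    have hg := grow j
    rw [hc0] at hg
    have e : ((j:ℤ) + 2) * (M:ℤ) = ((M * (j + 2) : ℕ) : ℤ) := by push_cast; ring
    have hfinal : c ((j:ℤ) + 2) = (cyclen ((φ ^ (M * (j + 2))) w) : ℝ) := by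
      simp only [hc]
      rw [e, zpow_natCast]
    rw [hfinal] at hg
    have en : j + 2 - 1 = j + 1 := by omega
    rw [en]
    exact hg

end
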